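/- (Distance bound for generalized concatenated codes, single-level case, i.e., concatenation.) Let A ⊆ F_q^{m_1} × ... × F_q^{m_m} be an F_q-linear polyalphabetic outer code with minimum Hamming distance d_H(A) (counting nonzero block-symbols), and for each ℓ let B_ℓ ⊆ F_q^{n_ℓ} be a linear inner code of dimension m_ℓ with injective linear encoder. Then the concatenated code C = {(B_1.enc(a_1),...,B_m.enc(a_m)) : a ∈ A} ⊆ F_q^n has minimum weighted-Hamming distance d_λ(C) ≥ Σ_{ℓ=1}^{d_H(A)} σ_ℓ, where σ_1 ≤ σ_2 ≤ ... ≤ σ_m is the sorted sequence of the values λ_ℓ · d_H(B_ℓ). -/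

import Mathlib

variable {F : Type} [Field F] [Fintype F] [DecidableEq F]

/-- Weighted-Hamming weight of a block-partitioned vector. -/
def wL {m : ℕ} (n : Fin m → ℕ) (lam : Fin m → ℕ) (a : ∀ ℓ, Fin (n ℓ) → F) : ℕ :=
  ∑ ℓ, lam ℓ * hammingNorm (a ℓ)

/-- `τ_λ(c) + 1`: minimum over `r` of `max {w_λ(r), w_λ(c − r)}`. -/
noncomputable def tauAux {m : ℕ} (n lam : Fin m → ℕ) (c : ∀ ℓ, Fin (n ℓ) → F) : ℕ :=
  sInf {x | ∃ r : ∀ ℓ, Fin (n ℓ) → F, x = max (wL n lam r) (wL n lam (c - r))}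

/-- Error-correction radius `τ_λ(c)`. -/
noncomputable def tau {m : ℕ} (n lam : Fin m → ℕ) (c : ∀ ℓ, Fin (n ℓ) → F) : ℕ :=
  tauAux n lam c - 1

/-- Weighted-Hamming ball of radius `t`. -/
def ball {m : ℕ} (n lam : Fin m → ℕ) (t : ℕ) : Set (∀ ℓ, Fin (n ℓ) → F) :=
  {x | wL n lam x ≤ t}

/-- Difference set of the weighted-Hamming ball of radius `t`. -/
def dball {m : ℕ} (n lam : Fin m → ℕ) (t : ℕ) : Set (∀ ℓ, Fin (n ℓ) → F) :=
  {z | ∃ x ∈ ball n lam t, ∃ y ∈ ball n lam t, z = x - y}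

/-- Minimum weighted-Hamming distance of a linear code. -/
noncomputable def dL {m : ℕ} (n lam : Fin m → ℕ) (C : Submodule F (∀ ℓ, Fin (n ℓ) → F)) : ℕ :=
  sInf {x | ∃ c ∈ C, c ≠ 0 ∧ x = wL n lam c}

/-- Error-correction capability of a linear code. -/
noncomputable def tL {m : ℕ} (n lam : Fin m → ℕ) (C : Submodule F (∀ ℓ, Fin (n ℓ) → F)) : ℕ :=
  sInf {x | ∃ c ∈ C, c ≠ 0 ∧ x = tau n lam c}

section Concatenated

variable {m : ℕ} (nn md lam : Fin m → ℕ)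
variable (enc : ∀ ℓ, (Fin (md ℓ) → F) →ₗ[F] (Fin (nn ℓ) → F))
variable (A : Submodule F (∀ ℓ, Fin (md ℓ) → F))

/-- The concatenated code `C = {(enc_1(a_1), …, enc_m(a_m)) : a ∈ A}`. -/
def ccode : Set (∀ ℓ, Fin (nn ℓ) → F) :=
  {c | ∃ a ∈ A, c = fun ℓ => enc ℓ (a ℓ)}

/-- Minimum (block-symbol) Hamming distance of the polyalphabetic outer code `A`. -/
noncomputable def dHA : ℕ :=
  sInf {x | ∃ a ∈ A, a ≠ 0 ∧ x = (Finset.univ.filter fun ℓ => a ℓ ≠ 0).card}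

/-- Minimum Hamming distance of the inner code `B_ℓ = range (enc ℓ)`. -/
noncomputable def dHB (ℓ : Fin m) : ℕ :=
  sInf {x | ∃ v ∈ Set.range (enc ℓ), v ≠ 0 ∧ x = hammingNorm v}

/-- Minimum weighted-Hamming distance of a (not necessarily linear) set of vectors. -/
noncomputable def dLset (S : Set (∀ ℓ, Fin (nn ℓ) → F)) : ℕ :=
  sInf {x | ∃ c ∈ S, c ≠ 0 ∧ x = wL nn lam c}

/-- Error-correction capability of a set of vectors. -/
noncomputable def tLset (S : Set (∀ ℓ, Fin (nn ℓ) → F)) : ℕ :=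
  sInf {x | ∃ c ∈ S, c ≠ 0 ∧ x = tau nn lam c}

/-- Sum of the `d_H(A)` smallest values among `{λ_ℓ · d_H(B_ℓ)}`
(i.e. `σ_1 + … + σ_{d_H(A)}` for the sorted sequence `σ_1 ≤ … ≤ σ_m`). -/
noncomputable def sortedSum : ℕ :=
  (((Finset.univ.val.map fun ℓ => lam ℓ * dHB nn md enc ℓ).sort (· ≤ ·)).take
    (dHA md A)).sum

end Concatenated

lemma take_sorted_sum_le {L L' : List ℕ} (hL : L.Pairwise (·≤·)) (hsub : List.Sublist L' L)
    {d : ℕ} (hd : d ≤ L'.length) : (L.take d).sum ≤ (L'.take d).sum := by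
  obtain ⟨f, hf⟩ := List.sublist_iff_exists_fin_orderEmbedding_get_eq.mp hsub
  have hle : ∀ k (h : k < L'.length), k ≤ (f ⟨k, h⟩ : ℕ) := by
    intro k
    induction k using Nat.strong_induction_on with
    | _ k ih =>
      intro h
      rcases Nat.eq_zero_or_pos k with hk | hk
      · omega
      · have h1 : k - 1 < L'.length := by omega
        have := ih (k - 1) (by omega) h1
        have hlt : (f ⟨k - 1, h1⟩ : ℕ) < (f ⟨k, h⟩ : ℕ) := by
          have : (⟨k - 1, h1⟩ : Fin L'.length) < ⟨k, h⟩ := by simp [Fin.lt_def]; omega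
          exact f.strictMono this
        omega
  induction d with
  | zero => simp
  | succ d ihd =>
    have hd' : d < L'.length := hd
    have hdL : d < L.length := lt_of_lt_of_le hd' hsub.length_le
    rw [List.sum_take_succ _ _ hdL, List.sum_take_succ _ _ hd']
    refine Nat.add_le_add (ihd (le_of_lt hd')) ?_
    have h1 : L'[d] = L.get (f ⟨d, hd'⟩) := hf ⟨d, hd'⟩
    rw [h1]
    exact hL.rel_get_of_le (hle d hd')

/-- distance bound for concatenated codes:
`d_λ(C) ≥ σ_1 + … + σ_{d_H(A)}` where `σ` sorts the values `λ_ℓ d_H(B_ℓ)`. -/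
theorem concat_distance_bound {m : ℕ} (nn md lam : Fin m → ℕ)
    (enc : ∀ ℓ, (Fin (md ℓ) → F) →ₗ[F] (Fin (nn ℓ) → F))
    (hinj : ∀ ℓ, Function.Injective (enc ℓ))
    (A : Submodule F (∀ ℓ, Fin (md ℓ) → F)) :
    sortedSum nn md lam enc A ≤ dLset nn lam (ccode nn md enc A) := by
  classical
  have hazero : ∀ a : (∀ ℓ, Fin (md ℓ) → F), a ≠ 0 →
      (fun ℓ => enc ℓ (a ℓ)) ≠ (0 : ∀ ℓ, Fin (nn ℓ) → F) := by
    intro a ha hc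
    apply ha
    funext ℓ
    have : enc ℓ (a ℓ) = enc ℓ 0 := by
      rw [map_zero]; exact congrFun hc ℓ
    exact hinj ℓ this
  rcases Set.eq_empty_or_nonempty
      {x | ∃ c ∈ ccode nn md enc A, c ≠ 0 ∧ x = wL nn lam c} with hS | hS
  · -- the code has no nonzero codewords, so A = {0} and dHA = 0
    have hAset : {x | ∃ a ∈ A, a ≠ 0 ∧
        x = (Finset.univ.filter fun ℓ => a ℓ ≠ 0).card} = ∅ := by
      rw [Set.eq_empty_iff_forall_notMem]
      rintro x ⟨a, haA, hane, hx⟩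
      have : wL nn lam (fun ℓ => enc ℓ (a ℓ)) ∈
          {x | ∃ c ∈ ccode nn md enc A, c ≠ 0 ∧ x = wL nn lam c} :=
        ⟨fun ℓ => enc ℓ (a ℓ), ⟨a, haA, rfl⟩, hazero a hane, rfl⟩
      rw [hS] at this
      exact this
    have : dHA md A = 0 := by
      unfold dHA; rw [hAset, Nat.sInf_empty]
    unfold sortedSum
    rw [this]
    simp
  · apply le_csInf hS
    rintro x ⟨c, ⟨a, haA, rfl⟩, hcne, rfl⟩
    have hane : a ≠ 0 := by
      rintro rfl
      exact hcne (by funext ℓ; simp)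
    set s : Finset (Fin m) := Finset.univ.filter fun ℓ => a ℓ ≠ 0 with hs
    set T : Multiset ℕ := s.val.map fun ℓ => lam ℓ * dHB nn md enc ℓ with hT
    set M : Multiset ℕ := Finset.univ.val.map fun ℓ => lam ℓ * dHB nn md enc ℓ with hM
    have hTM : T ≤ M := Multiset.map_le_map (Finset.val_le_iff.mpr (Finset.filter_subset _ _))
    have hd : dHA md A ≤ Multiset.card T := by
      have : dHA md A ≤ s.card := Nat.sInf_le ⟨a, haA, hane, rfl⟩
      simpa [hT] using this
    -- sortedSum ≤ T.sum
    have hsub : List.Sublist (T.sort (·≤·)) (M.sort (·≤·)) := by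
      apply List.sublist_of_subperm_of_pairwise _ (Multiset.pairwise_sort _ _)
        (Multiset.pairwise_sort _ _)
      rw [← Multiset.coe_le, Multiset.sort_eq, Multiset.sort_eq]
      exact hTM
    have h1 : sortedSum nn md lam enc A ≤ ((T.sort (·≤·)).take (dHA md A)).sum := by
      apply take_sorted_sum_le (Multiset.pairwise_sort _ _) hsub
      simpa using hd
    have h2 : ((T.sort (·≤·)).take (dHA md A)).sum ≤ T.sum := by
      conv_rhs => rw [← Multiset.sort_eq T (·≤·)]
      rw [show ((T.sort (·≤·) : List ℕ) : Multiset ℕ).sum = (T.sort (·≤·)).sum from rfl]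
      conv_rhs => rw [← List.take_append_drop (dHA md A) (T.sort (·≤·))]
      rw [List.sum_append]
      exact Nat.le_add_right _ _
    -- T.sum ≤ wL
    have h3 : T.sum ≤ wL nn lam (fun ℓ => enc ℓ (a ℓ)) := by
      have hTsum : T.sum = ∑ ℓ ∈ s, lam ℓ * dHB nn md enc ℓ := rfl
      rw [hTsum]
      calc ∑ ℓ ∈ s, lam ℓ * dHB nn md enc ℓ
          ≤ ∑ ℓ ∈ s, lam ℓ * hammingNorm (enc ℓ (a ℓ)) := by
            apply Finset.sum_le_sum
            intro ℓ hℓ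
            have haℓ : a ℓ ≠ 0 := (Finset.mem_filter.mp hℓ).2
            have hene : enc ℓ (a ℓ) ≠ 0 := by
              intro h
              exact haℓ (hinj ℓ (by rw [h, map_zero]))
            exact Nat.mul_le_mul_left _
              (Nat.sInf_le ⟨enc ℓ (a ℓ), ⟨a ℓ, rfl⟩, hene, rfl⟩)
        _ ≤ ∑ ℓ, lam ℓ * hammingNorm (enc ℓ (a ℓ)) :=
            Finset.sum_le_sum_of_subset (Finset.subset_univ s)
        _ = wL nn lam (fun ℓ => enc ℓ (a ℓ)) := rfl
    exact le_trans h1 (le_trans h2 h3)
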